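/- Let g : ℝⁿ × ℝᵐ → ℝ be differentiable, let ᾱ : ℝⁿ → ℝᵐ be differentiable with D_α g(x, ᾱ(x)) = 0 for every x, let g̃(x) = g(x, ᾱ(x)), and let X ⊆ ℝⁿ be a convex set. If x̄ ∈ X is a stationary point of g̃ over X, meaning D g̃(x̄)(x − x̄) ≥ 0 for all x ∈ X, then (x̄, ᾱ(x̄)) is a stationary point of g over X × ℝᵐ, meaning D g(x̄, ᾱ(x̄))((x, α) − (x̄, ᾱ(x̄))) ≥ 0 for all x ∈ X and all α ∈ ℝᵐ. -/

import Mathlib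

/-- If `x̄` is a stationary point of the reduced objective `gtilde x = g (x, αbar x)`
over a convex set `X`, then `(x̄, αbar x̄)` is a stationary point of `g` over `X × ℝᵐ`. -/
theorem variable_projection_stationary (n m : ℕ)
    (g : EuclideanSpace ℝ (Fin n) × EuclideanSpace ℝ (Fin m) → ℝ)
    (αbar : EuclideanSpace ℝ (Fin n) → EuclideanSpace ℝ (Fin m))
    (hg : Differentiable ℝ g) (hαbar : Differentiable ℝ αbar)
    (hcrit : ∀ x, (fderiv ℝ g (x, αbar x)).comp
      (ContinuousLinearMap.inr ℝ (EuclideanSpace ℝ (Fin n)) (EuclideanSpace ℝ (Fin m))) = 0)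
    (gtilde : EuclideanSpace ℝ (Fin n) → ℝ)
    (hgtilde : ∀ x, gtilde x = g (x, αbar x))
    (X : Set (EuclideanSpace ℝ (Fin n))) (hX : Convex ℝ X)
    (xb : EuclideanSpace ℝ (Fin n)) (hxb : xb ∈ X)
    (hstat : ∀ x ∈ X, 0 ≤ fderiv ℝ gtilde xb (x - xb)) :
    ∀ x ∈ X, ∀ α : EuclideanSpace ℝ (Fin m),
      0 ≤ fderiv ℝ g (xb, αbar xb) ((x, α) - (xb, αbar xb)) := by
  intro x hx α
  have hzero : ∀ w : EuclideanSpace ℝ (Fin m),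
      fderiv ℝ g (xb, αbar xb) (0, w) = 0 := by
    intro w
    have := congrFun (congrArg DFunLike.coe (hcrit xb)) w
    simpa using this
  have hsplit : ((x, α) - (xb, αbar xb) :
      EuclideanSpace ℝ (Fin n) × EuclideanSpace ℝ (Fin m))
      = (x - xb, (0 : EuclideanSpace ℝ (Fin m))) + (0, α - αbar xb) := by
    simp [Prod.ext_iff]
  rw [hsplit, map_add, hzero, add_zero]
  -- chain rule
  have hgt : gtilde = g ∘ (fun y => (y, αbar y)) := funext hgtilde
  have hchain : fderiv ℝ gtilde xb = (fderiv ℝ g (xb, αbar xb)).comp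
      (fderiv ℝ (fun y => (y, αbar y)) xb) := by
    rw [hgt]
    exact fderiv_comp (x := xb) (hg _) (differentiableAt_id.prodMk (hαbar _))
  have hinner : fderiv ℝ (fun y => (y, αbar y)) xb (x - xb)
      = (x - xb, fderiv ℝ αbar xb (x - xb)) := by
    have h : HasFDerivAt (fun y => (y, αbar y))
        ((ContinuousLinearMap.id ℝ _).prod (fderiv ℝ αbar xb)) xb :=
      (hasFDerivAt_id xb).prodMk (hαbar xb).hasFDerivAt
    rw [h.fderiv]; rfl
  have hval : fderiv ℝ gtilde xb (x - xb)
      = fderiv ℝ g (xb, αbar xb) (x - xb, (0 : EuclideanSpace ℝ (Fin m))) := by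
    rw [hchain]
    simp only [ContinuousLinearMap.comp_apply, hinner]
    have : ((x - xb, fderiv ℝ αbar xb (x - xb)) :
        EuclideanSpace ℝ (Fin n) × EuclideanSpace ℝ (Fin m))
        = (x - xb, (0 : EuclideanSpace ℝ (Fin m))) + (0, fderiv ℝ αbar xb (x - xb)) := by
      simp [Prod.ext_iff]
    rw [this, map_add, hzero, add_zero]
  rw [← hval]
  exact hstat x hx
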